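/- If G is a connected k-extendable graph with at least 2k+2 vertices, then G is (k+1)-connected; in particular its minimum degree is at least k+1. -/

import Mathlib

/-- A graph `G` is `k`-extendable if it has a perfect matching and every matching
consisting of `k` pairwise disjoint edges extends to a perfect matching. -/
def SimpleGraph.IsKExtendable {V : Type*} [Fintype V] (G : SimpleGraph V) (k : ℕ) : Prop :=
  (∃ M : G.Subgraph, M.IsPerfectMatching) ∧
  ∀ M : G.Subgraph, M.IsMatching → M.edgeSet.ncard = k →
    ∃ P : G.Subgraph, P.IsPerfectMatching ∧ M ≤ P

/-- A graph `G` is an `(n,k)`-graph if `|G| ≥ n + 2k + 2`, `|G| ≡ n (mod 2)`, and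
deleting any `n` vertices leaves a `k`-extendable graph. -/
def SimpleGraph.IsNKGraph {V : Type*} [Fintype V] [DecidableEq V]
    (G : SimpleGraph V) (n k : ℕ) : Prop :=
  n + 2 * k + 2 ≤ Fintype.card V ∧ Fintype.card V % 2 = n % 2 ∧
  ∀ S : Finset V, S.card = n →
    SimpleGraph.IsKExtendable (G.induce ((Sᶜ : Finset V) : Set V)) k

set_option linter.unusedSectionVars false
set_option linter.unusedVariables false
set_option maxHeartbeats 1600000

universe u

open SimpleGraph Subgraph

section Helpers

variable {V : Type u} [Fintype V] [DecidableEq V] {G : SimpleGraph V}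

noncomputable def pmP {P : G.Subgraph} (hP : P.IsPerfectMatching) (v : V) : V :=
  (hP.1 (hP.2 v)).choose

lemma pmP_adj {P : G.Subgraph} (hP : P.IsPerfectMatching) (v : V) :
    P.Adj v (pmP hP v) := (hP.1 (hP.2 v)).choose_spec.1

lemma pmP_eq {P : G.Subgraph} (hP : P.IsPerfectMatching) {x y : V} (h : P.Adj x y) :
    pmP hP x = y := ((hP.1 (hP.2 x)).unique (pmP_adj hP x) h)

lemma adj_pmP {P : G.Subgraph} (hP : P.IsPerfectMatching) (v : V) :
    G.Adj v (pmP hP v) := P.adj_sub (pmP_adj hP v)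

lemma pmP_invol {P : G.Subgraph} (hP : P.IsPerfectMatching) (v : V) :
    pmP hP (pmP hP v) = v := pmP_eq hP (pmP_adj hP v).symm

lemma pmP_ne {P : G.Subgraph} (hP : P.IsPerfectMatching) (v : V) :
    pmP hP v ≠ v := fun h => by
  have := adj_pmP hP v
  rw [h] at this
  exact G.loopless.irrefl v this

lemma support_sup' (H H' : G.Subgraph) : (H ⊔ H').support = H.support ∪ H'.support := by
  ext x
  simp only [Subgraph.mem_support, Set.mem_union, Subgraph.sup_adj]
  constructor
  · rintro ⟨w, h | h⟩
    · exact Or.inl ⟨w, h⟩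
    · exact Or.inr ⟨w, h⟩
  · rintro (⟨w, h⟩ | ⟨w, h⟩)
    · exact ⟨w, Or.inl h⟩
    · exact ⟨w, Or.inr h⟩

/-- adding a disjoint edge to a matching -/
lemma matching_sup_edge {N : G.Subgraph} (hN : N.IsMatching) {x y : V} (hxy : G.Adj x y)
    (hx : x ∉ N.support) (hy : y ∉ N.support) :
    (N ⊔ G.subgraphOfAdj hxy).IsMatching ∧
    (N ⊔ G.subgraphOfAdj hxy).edgeSet.ncard = N.edgeSet.ncard + 1 ∧
    (N ⊔ G.subgraphOfAdj hxy).support = N.support ∪ {x, y} := by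
  have hd : Disjoint N.support (G.subgraphOfAdj hxy).support := by
    rw [SimpleGraph.support_subgraphOfAdj]
    rw [Set.disjoint_right]
    rintro a (rfl | rfl) <;> assumption
  refine ⟨hN.sup (SimpleGraph.Subgraph.IsMatching.subgraphOfAdj hxy) hd, ?_, ?_⟩
  · rw [Subgraph.edgeSet_sup, SimpleGraph.edgeSet_subgraphOfAdj]
    rw [Set.ncard_union_eq ?_ (Set.toFinite _) (Set.toFinite _)]
    · simp
    · rw [Set.disjoint_singleton_right, Subgraph.mem_edgeSet]
      intro h
      exact hx ⟨y, h⟩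
  · rw [support_sup', SimpleGraph.support_subgraphOfAdj]

/-- padding lemma: a matching of any prescribed size avoiding a partner-closed set. -/
lemma pad {P : G.Subgraph} (hP : P.IsPerfectMatching) :
    ∀ (t : ℕ) (U : Finset V), (∀ x ∈ U, pmP hP x ∈ U) → U.card + 2 * t ≤ Fintype.card V →
    ∃ N : G.Subgraph, N.IsMatching ∧ N.edgeSet.ncard = t ∧ ∀ x ∈ N.support, x ∉ U := by
  intro t
  induction t with
  | zero =>
    intro U hUinv hcard
    refine ⟨⊥, ?_, ?_, ?_⟩
    · intro v hv
      simp only [Subgraph.verts_bot, Set.mem_empty_iff_false] at hv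
    · simp [Subgraph.edgeSet_bot]
    · intro x hx
      rw [Subgraph.mem_support] at hx
      obtain ⟨w, hw⟩ := hx
      exact absurd hw (by simp)
  | succ t ih =>
    intro U hUinv hcard
    have hlt : U.card < Fintype.card V := by omega
    have hcompl : (Uᶜ : Finset V).Nonempty := by
      rw [← Finset.card_pos, Finset.card_compl]
      omega
    obtain ⟨x, hxU⟩ := hcompl
    rw [Finset.mem_compl] at hxU
    have hyU : pmP hP x ∉ U := fun h => hxU (by simpa [pmP_invol] using hUinv _ h)
    set y := pmP hP x with hy
    have hxy : G.Adj x y := adj_pmP hP x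
    set U' := insert x (insert y U) with hU'
    have hU'inv : ∀ z ∈ U', pmP hP z ∈ U' := by
      intro z hz
      rw [hU', Finset.mem_insert, Finset.mem_insert] at hz ⊢
      rcases hz with rfl | rfl | hz
      · exact Or.inr (Or.inl rfl)
      · exact Or.inl (by rw [hy, pmP_invol])
      · exact Or.inr (Or.inr (hUinv _ hz))
    have hU'card : U'.card + 2 * t ≤ Fintype.card V := by
      have h1 : U'.card ≤ U.card + 2 := by
        calc U'.card ≤ (insert y U).card + 1 := Finset.card_insert_le _ _
        _ ≤ U.card + 1 + 1 := by
          have := Finset.card_insert_le y U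
          omega
      omega
    obtain ⟨N, hN, hNcard, hNsupp⟩ := ih U' hU'inv hU'card
    have hxs : x ∉ N.support := fun h => hNsupp x h (by simp [hU'])
    have hys : y ∉ N.support := fun h => hNsupp y h (by simp [hU'])
    obtain ⟨hm, hc, hs⟩ := matching_sup_edge hN hxy hxs hys
    refine ⟨N ⊔ G.subgraphOfAdj hxy, hm, by omega, ?_⟩
    intro z hz
    rw [hs] at hz
    rcases hz with hz | hz
    · exact hNsupp z hz ∘ (fun h => by simp [hU', h])
    · rcases hz with rfl | rfl
      · exact hxU
      · exact hyU

structure IsSep (G : SimpleGraph V) (S A B : Finset V) : Prop where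
  hA : A.Nonempty
  hB : B.Nonempty
  hSA : Disjoint S A
  hSB : Disjoint S B
  hAB : Disjoint A B
  hcov : ∀ x : V, x ∈ S ∨ x ∈ A ∨ x ∈ B
  hadj : ∀ ⦃a⦄, a ∈ A → ∀ ⦃b⦄, b ∈ B → ¬ G.Adj a b



lemma IsSep.symm {S A B : Finset V} (h : IsSep G S A B) : IsSep G S B A :=
  ⟨h.hB, h.hA, h.hSB, h.hSA, h.hAB.symm, fun x => by rcases h.hcov x with h1|h1|h1 <;> tauto,
   fun b hb a ha hadj => h.hadj ha hb hadj.symm⟩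

lemma walk_stay {A B : Finset V} (hadj : ∀ ⦃a⦄, a ∈ A → ∀ ⦃b⦄, b ∈ B → ¬ G.Adj a b)
    (hcov : ∀ x, x ∈ A ∨ x ∈ B) {x y : V} (p : G.Walk x y) (hx : x ∈ A) : y ∈ A := by
  induction p with
  | nil => exact hx
  | @cons u v w h q ih =>
    rcases hcov v with hv | hv
    · exact ih hv
    · exact absurd h (hadj hx hv)

/-- parity lemma: |B| ≡ #(vertices of B matched into S) mod 2. -/
lemma par {P : G.Subgraph} (hP : P.IsPerfectMatching) {S A B : Finset V}
    (hsep : IsSep G S A B) :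
    B.card % 2 = (B.filter (fun x => pmP hP x ∈ S)).card % 2 := by
  have hdich : ∀ x ∈ B, pmP hP x ∈ S ∨ pmP hP x ∈ B := by
    intro x hx
    rcases hsep.hcov (pmP hP x) with h | h | h
    · exact Or.inl h
    · exact absurd (adj_pmP hP x).symm (hsep.hadj h hx)
    · exact Or.inr h
  have hTmem : ∀ x ∈ B.filter (fun x => pmP hP x ∈ B),
      pmP hP x ∈ B.filter (fun x => pmP hP x ∈ B) := by
    intro x hx
    rw [Finset.mem_filter] at hx ⊢
    exact ⟨hx.2, by rw [pmP_invol]; exact hx.1⟩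
  have heven : Even (B.filter (fun x => pmP hP x ∈ B)).card := by
    set MT : G.Subgraph := {
      verts := ↑(B.filter (fun x => pmP hP x ∈ B))
      Adj := fun x y => x ∈ B.filter (fun x => pmP hP x ∈ B) ∧
        y ∈ B.filter (fun x => pmP hP x ∈ B) ∧ P.Adj x y
      adj_sub := fun h => P.adj_sub h.2.2
      edge_vert := fun h => h.1
      symm := ⟨fun x y ⟨hx, hy, h⟩ => ⟨hy, hx, h.symm⟩⟩ } with hMT
    have hm : MT.IsMatching := by
      intro v hv
      have hv' : v ∈ B.filter (fun x => pmP hP x ∈ B) := hv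
      refine ⟨pmP hP v, ⟨hv', hTmem v hv', pmP_adj hP v⟩, ?_⟩
      intro y hy
      exact (pmP_eq hP hy.2.2).symm
    have h3 := hm.even_card
    simp only [hMT] at h3
    have h2 : (Finset.univ.filter (fun x => x ∈ B ∧ pmP hP x ∈ B))
        = B.filter (fun x => pmP hP x ∈ B) := by
      ext x
      simp [Finset.mem_filter]
    simpa [h2] using h3
  have hsplit : (B.filter (fun x => pmP hP x ∈ B)).card
      + (B.filter (fun x => pmP hP x ∈ S)).card = B.card := by
    have heq : B.filter (fun x => pmP hP x ∈ B)
        = B.filter (fun x => ¬ (pmP hP x ∈ S)) := by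
      apply Finset.filter_congr
      intro x hx
      constructor
      · intro hb hs
        exact (Finset.disjoint_left.mp hsep.hSB) hs hb
      · intro hns
        rcases hdich x hx with h | h
        · exact absurd h hns
        · exact h
    rw [heq, add_comm]
    exact Finset.card_filter_add_card_filter_not (fun x => pmP hP x ∈ S)
  obtain ⟨m, hm⟩ := heven
  omega

/-- restriction of a perfect matching of `G` to an induced subgraph whose vertex set
is closed under the matching. -/
lemma restrPM {P : G.Subgraph} (hP : P.IsPerfectMatching) (W : Finset V)
    (hcl : ∀ x : V, x ∈ W → pmP hP x ∈ W) :
    ∃ Q : (G.induce (W : Set V)).Subgraph, Q.IsPerfectMatching ∧ Q.verts = Set.univ ∧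
      ∀ x y : (W : Set V), (Q.Adj x y ↔ P.Adj ↑x ↑y) := by
  refine ⟨{
    verts := Set.univ
    Adj := fun x y => P.Adj ↑x ↑y
    adj_sub := fun h => P.adj_sub h
    edge_vert := fun _ => Set.mem_univ _
    symm := ⟨fun x y h => h.symm⟩ }, ⟨?_, fun v => Set.mem_univ _⟩, rfl, fun x y => Iff.rfl⟩
  rintro ⟨v, hv⟩ -
  have hpv : pmP hP v ∈ W := hcl v (by exact_mod_cast hv)
  refine ⟨⟨pmP hP v, by exact_mod_cast hpv⟩, pmP_adj hP v, ?_⟩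
  rintro ⟨y, hy⟩ h
  have : pmP hP v = y := pmP_eq hP h
  exact Subtype.ext this.symm

/-- lifting a subgraph-matching of an induced subgraph to the ambient graph. -/
lemma liftSub (W : Finset V) (M : (G.induce (W : Set V)).Subgraph) (hM : M.IsMatching) :
    ∃ M' : G.Subgraph, M'.IsMatching ∧ M'.edgeSet.ncard = M.edgeSet.ncard ∧
      (∀ x ∈ M'.support, x ∈ W) ∧
      (∀ (x y : (W : Set V)), M'.Adj ↑x ↑y ↔ M.Adj x y) := by
  set M' : G.Subgraph := {
    verts := Subtype.val '' M.verts
    Adj := fun x y => ∃ (hx : x ∈ (W : Set V)) (hy : y ∈ (W : Set V)), M.Adj ⟨x, hx⟩ ⟨y, hy⟩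
    adj_sub := by
      rintro x y ⟨hx, hy, h⟩
      exact M.adj_sub h
    edge_vert := by
      rintro x y ⟨hx, hy, h⟩
      exact ⟨⟨x, hx⟩, M.edge_vert h, rfl⟩
    symm := by
      constructor
      rintro x y ⟨hx, hy, h⟩
      exact ⟨hy, hx, h.symm⟩ } with hM'
  have hAdjIff : ∀ (x y : (W : Set V)), M'.Adj ↑x ↑y ↔ M.Adj x y := by
    rintro ⟨x, hx⟩ ⟨y, hy⟩
    constructor
    · rintro ⟨hx', hy', h⟩
      convert h
    · intro h
      exact ⟨hx, hy, h⟩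
  refine ⟨M', ?_, ?_, ?_, hAdjIff⟩
  · rintro v ⟨⟨x, hx⟩, hxv, rfl⟩
    obtain ⟨⟨w, hw⟩, hadj, huniq⟩ := hM hxv
    refine ⟨w, ⟨hx, hw, hadj⟩, ?_⟩
    rintro y ⟨hx', hy', h⟩
    have := huniq ⟨y, hy'⟩ (by convert h)
    exact congrArg Subtype.val this
  · have himg : M'.edgeSet = Sym2.map Subtype.val '' M.edgeSet := by
      ext e
      refine Sym2.ind (fun x y => ?_) e
      simp only [Subgraph.mem_edgeSet, Set.mem_image]
      constructor
      · rintro ⟨hx, hy, h⟩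
        exact ⟨s(⟨x, hx⟩, ⟨y, hy⟩), h, rfl⟩
      · rintro ⟨e', he', heq⟩
        revert he' heq
        refine Sym2.ind (fun a b => ?_) e'
        intro he' heq
        simp only [Sym2.map_pair_eq, Sym2.eq, Sym2.rel_iff', Prod.mk.injEq, Prod.swap_prod_mk]
          at heq
        rcases heq with ⟨rfl, rfl⟩ | ⟨h1, h2⟩
        · exact ⟨a.2, b.2, he'⟩
        · subst h1; subst h2
          exact ⟨b.2, a.2, he'.symm⟩
    rw [himg]
    exact Set.ncard_image_of_injective _ (Sym2.map.injective Subtype.val_injective)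
  · intro x hx
    rw [Subgraph.mem_support] at hx
    obtain ⟨w, hw, _, _⟩ := hx
    exact_mod_cast hw

open scoped Classical in
/-- If an induced subgraph on the (nonempty) vertex set `W` is disconnected, the complement
of `W` is a cutset. -/
lemma sep_of_induce_disconnected {W : Finset V} (hW : W.Nonempty)
    (h : ¬ (G.induce (W : Set V)).Connected) : ∃ A B : Finset V, IsSep G Wᶜ A B := by
  have hne : Nonempty (W : Set V) := ⟨⟨hW.choose, by exact_mod_cast hW.choose_spec⟩⟩
  rw [SimpleGraph.connected_iff] at h
  push_neg at h
  have hpre : ¬ ∀ (u v : (W : Set V)), (G.induce (W : Set V)).Reachable u v :=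
    fun hp => (h hp).false hne.some
  push_neg at hpre
  obtain ⟨x, y, hxy⟩ := hpre
  set A : Finset V := W.filter
    (fun w => ∃ hw : w ∈ (W : Set V), (G.induce (W : Set V)).Reachable x ⟨w, hw⟩) with hA
  set B : Finset V := W \ A with hB
  have hxA : (x : V) ∈ A := by
    rw [hA, Finset.mem_filter]
    exact ⟨by exact_mod_cast x.2, x.2, Reachable.refl x⟩
  have hyB : (y : V) ∈ B := by
    rw [hB, Finset.mem_sdiff]
    refine ⟨by exact_mod_cast y.2, ?_⟩
    rw [hA, Finset.mem_filter]
    rintro ⟨-, hw, hr⟩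
    exact hxy (by convert hr)
  refine ⟨A, B, ⟨x, hxA⟩, ⟨y, hyB⟩, ?_, ?_, ?_, ?_, ?_⟩
  · rw [Finset.disjoint_left]
    intro a ha ha'
    rw [Finset.mem_compl] at ha
    rw [hA, Finset.mem_filter] at ha'
    exact ha ha'.1
  · rw [Finset.disjoint_left]
    intro a ha ha'
    rw [Finset.mem_compl] at ha
    rw [hB, Finset.mem_sdiff] at ha'
    exact ha ha'.1
  · rw [hB]
    exact Finset.disjoint_sdiff
  · intro z
    by_cases hz : z ∈ W
    · by_cases hz' : z ∈ A
      · exact Or.inr (Or.inl hz')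
      · exact Or.inr (Or.inr (by rw [hB, Finset.mem_sdiff]; exact ⟨hz, hz'⟩))
    · exact Or.inl (Finset.mem_compl.mpr hz)
  · intro a ha b hb hadj
    rw [hA, Finset.mem_filter] at ha
    obtain ⟨haW, hwa, hra⟩ := ha
    rw [hB, Finset.mem_sdiff] at hb
    obtain ⟨hbW, hbA⟩ := hb
    apply hbA
    rw [hA, Finset.mem_filter]
    have hbW' : b ∈ (W : Set V) := by exact_mod_cast hbW
    refine ⟨hbW, hbW', ?_⟩
    refine hra.trans (SimpleGraph.Adj.reachable ?_)
    show G.Adj _ _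
    exact hadj

/-- Build a `k`-matching containing the single prescribed edge `u-c` and extend it
to a perfect matching. -/
lemma build1 {k : ℕ} {P : G.Subgraph} (hP : P.IsPerfectMatching)
    (hext : G.IsKExtendable k) (hcard : 2 * k + 2 ≤ Fintype.card V)
    {u c : V} (huc : G.Adj u c) (hk : 1 ≤ k)
    {U : Finset V} (hUinv : ∀ x ∈ U, pmP hP x ∈ U) (hUcard : U.card ≤ 4)
    (hu : u ∈ U) (hc : c ∈ U) :
    ∃ (P'' : G.Subgraph) (hP'' : P''.IsPerfectMatching), pmP hP'' u = c := by
  obtain ⟨N, hN, hNcard, hNsupp⟩ := pad hP (k - 1) U hUinv (by omega)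
  obtain ⟨hm, hcard1, hsupp1⟩ := matching_sup_edge hN huc (fun h => hNsupp u h hu)
    (fun h => hNsupp c h hc)
  obtain ⟨P'', hP'', hle⟩ := hext.2 _ hm (by rw [hcard1, hNcard]; omega)
  refine ⟨P'', hP'', pmP_eq hP'' (hle.2 ?_)⟩
  exact Subgraph.sup_adj.mpr (Or.inr (by simp))

/-- Build a `k`-matching containing the two prescribed edges `u-c`, `v-d` and extend it
to a perfect matching. -/
lemma build2 {k : ℕ} {P : G.Subgraph} (hP : P.IsPerfectMatching)
    (hext : G.IsKExtendable k) (hcard : 2 * k + 2 ≤ Fintype.card V)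
    {u c v d : V} (huc : G.Adj u c) (hvd : G.Adj v d) (hk : 2 ≤ k)
    (hvu : v ≠ u) (hvc : v ≠ c) (hdu : d ≠ u) (hdc : d ≠ c)
    {U : Finset V} (hUinv : ∀ x ∈ U, pmP hP x ∈ U) (hUcard : U.card ≤ 6)
    (hu : u ∈ U) (hc : c ∈ U) (hv : v ∈ U) (hd : d ∈ U) :
    ∃ (P'' : G.Subgraph) (hP'' : P''.IsPerfectMatching),
      pmP hP'' u = c ∧ pmP hP'' v = d := by
  obtain ⟨N, hN, hNcard, hNsupp⟩ := pad hP (k - 2) U hUinv (by omega)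
  obtain ⟨hm1, hcard1, hsupp1⟩ := matching_sup_edge hN huc (fun h => hNsupp u h hu)
    (fun h => hNsupp c h hc)
  have hvs : v ∉ (N ⊔ G.subgraphOfAdj huc).support := by
    rw [hsupp1]
    rintro (h | h)
    · exact hNsupp v h hv
    · rcases h with h | h
      · exact hvu h
      · exact hvc h
  have hds : d ∉ (N ⊔ G.subgraphOfAdj huc).support := by
    rw [hsupp1]
    rintro (h | h)
    · exact hNsupp d h hd
    · rcases h with h | h
      · exact hdu h
      · exact hdc h
  obtain ⟨hm2, hcard2, hsupp2⟩ := matching_sup_edge hm1 hvd hvs hds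
  obtain ⟨P'', hP'', hle⟩ := hext.2 _ hm2 (by rw [hcard2, hcard1, hNcard]; omega)
  refine ⟨P'', hP'', pmP_eq hP'' (hle.2 ?_), pmP_eq hP'' (hle.2 ?_)⟩
  · exact Subgraph.sup_adj.mpr (Or.inl (Subgraph.sup_adj.mpr
      (Or.inr (by simp))))
  · exact Subgraph.sup_adj.mpr (Or.inr (by simp))

lemma filter_pm_eq {P₀ : G.Subgraph} (hP₀ : P₀.IsPerfectMatching) (X S : Finset V) :
    X.filter (fun x => pmP hP₀ x ∈ S) = X ∩ S.image (pmP hP₀) := by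
  ext x
  simp only [Finset.mem_filter, Finset.mem_inter, Finset.mem_image]
  constructor
  · rintro ⟨hx, hs⟩
    exact ⟨hx, pmP hP₀ x, hs, pmP_invol hP₀ x⟩
  · rintro ⟨hx, y, hy, rfl⟩
    exact ⟨hx, by rw [pmP_invol]; exact hy⟩

/-- closure set for two matching edges {u,a} {v,b} plus one more vertex d -/
lemma closure6 {P : G.Subgraph} (hP : P.IsPerfectMatching) (u v d : V) :
    (∀ x ∈ ({u, pmP hP u, v, pmP hP v, d, pmP hP d} : Finset V),
      pmP hP x ∈ ({u, pmP hP u, v, pmP hP v, d, pmP hP d} : Finset V)) ∧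
    ({u, pmP hP u, v, pmP hP v, d, pmP hP d} : Finset V).card ≤ 6 := by
  constructor
  · intro x hx
    simp only [Finset.mem_insert, Finset.mem_singleton] at hx ⊢
    rcases hx with rfl | rfl | rfl | rfl | rfl | rfl
    · tauto
    · rw [pmP_invol]; tauto
    · tauto
    · rw [pmP_invol]; tauto
    · tauto
    · rw [pmP_invol]; tauto
  · have h1 := Finset.card_insert_le u ({pmP hP u, v, pmP hP v, d, pmP hP d} : Finset V)
    have h2 := Finset.card_insert_le (pmP hP u) ({v, pmP hP v, d, pmP hP d} : Finset V)
    have h3 := Finset.card_insert_le v ({pmP hP v, d, pmP hP d} : Finset V)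
    have h4 := Finset.card_insert_le (pmP hP v) ({d, pmP hP d} : Finset V)
    have h5 := Finset.card_insert_le d ({pmP hP d} : Finset V)
    have h6 : ({pmP hP d} : Finset V).card = 1 := Finset.card_singleton _
    omega


lemma inter_pair_eq_empty {X : Finset V} {a d : V} (ha : a ∉ X) (hd : d ∉ X) :
    X ∩ ({a, d} : Finset V) = ∅ := by
  ext x
  simp only [Finset.mem_inter, Finset.mem_insert, Finset.mem_singleton,
    Finset.notMem_empty, iff_false]
  rintro ⟨hx, rfl | rfl⟩ <;> [exact ha hx; exact hd hx]

lemma inter_pair_eq_singleton {X : Finset V} {a d : V} (ha : a ∈ X) (hd : d ∉ X) :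
    X ∩ ({a, d} : Finset V) = {a} := by
  ext x
  simp only [Finset.mem_inter, Finset.mem_insert, Finset.mem_singleton]
  constructor
  · rintro ⟨hx, rfl | rfl⟩
    · rfl
    · exact absurd hx hd
  · rintro rfl
    exact ⟨ha, Or.inl rfl⟩

lemma inter_pair_eq_singleton' {X : Finset V} {a d : V} (hd : d ∈ X) (ha : a ∉ X) :
    X ∩ ({a, d} : Finset V) = {d} := by
  ext x
  simp only [Finset.mem_inter, Finset.mem_insert, Finset.mem_singleton]
  constructor
  · rintro ⟨hx, rfl | rfl⟩
    · exact absurd hx ha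
    · rfl
  · rintro rfl
    exact ⟨hd, Or.inr rfl⟩

lemma case_b1 {k : ℕ} {P : G.Subgraph} (hP : P.IsPerfectMatching)
    (hext : G.IsKExtendable k) (hcard : 2 * k + 2 ≤ Fintype.card V)
    {S A B : Finset V} (hsep : IsSep G S A B) {u v : V}
    (hS : S = {u, v}) (huv : u ≠ v) (hk : 2 ≤ k)
    (ha : pmP hP u ∈ A) (hb : pmP hP v ∈ A)
    (hnbr : ∃ d ∈ B, G.Adj v d) : False := by
  obtain ⟨d, hdB, hvd⟩ := hnbr
  have hu : u ∈ S := by rw [hS]; exact Finset.mem_insert_self u _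
  have hv : v ∈ S := by rw [hS]; simp
  have hab : pmP hP u ≠ pmP hP v := by
    intro h
    apply huv
    rw [← pmP_invol hP u, h, pmP_invol]
  have hvu : v ≠ u := huv.symm
  have hva : v ≠ pmP hP u := fun h => Finset.disjoint_left.mp hsep.hSA hv (h ▸ ha)
  have hdu : d ≠ u := fun h => Finset.disjoint_left.mp hsep.hSB hu (h ▸ hdB)
  have hda : d ≠ pmP hP u := fun h => Finset.disjoint_left.mp hsep.hAB ha (h ▸ hdB)
  obtain ⟨hUinv, hUcard⟩ := closure6 hP u v d
  have hbd : pmP hP v ≠ d := fun h => Finset.disjoint_left.mp hsep.hAB hb (h ▸ hdB)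
  obtain ⟨P'', hP'', hc1, hc2⟩ := build2 hP hext hcard (adj_pmP hP u) hvd hk
    hvu hva.symm.symm hdu hda hUinv hUcard (by simp) (by simp) (by simp) (by simp)
  have base := par hP hsep.symm
  have new := par hP'' hsep.symm
  rw [filter_pm_eq hP A S, hS, Finset.image_insert, Finset.image_singleton] at base
  rw [filter_pm_eq hP'' A S, hS, Finset.image_insert, Finset.image_singleton,
    hc1, hc2] at new
  have hpair : A ∩ ({pmP hP u, pmP hP v} : Finset V) = {pmP hP u, pmP hP v} :=
    Finset.inter_eq_right.mpr (by
      intro x hx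
      rcases Finset.mem_insert.mp hx with rfl | hx
      · exact ha
      · rw [Finset.mem_singleton] at hx; exact hx ▸ hb)
  rw [hpair] at base
  rw [inter_pair_eq_singleton ha (fun h => Finset.disjoint_left.mp hsep.hAB h hdB)] at new
  rw [Finset.card_insert_of_notMem (by simpa using hab), Finset.card_singleton] at base
  rw [Finset.card_singleton] at new
  omega

lemma case_b2_half {k : ℕ} {P : G.Subgraph} (hP : P.IsPerfectMatching)
    (hext : G.IsKExtendable k) (hcard : 2 * k + 2 ≤ Fintype.card V)
    {S A B : Finset V} (hsep : IsSep G S A B) {u v : V}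
    (hS : S = {u, v}) (huv : u ≠ v) (hk : 2 ≤ k)
    (hmin : ∀ S' A' B' : Finset V, IsSep G S' A' B' → 2 ≤ S'.card)
    (hnbrA : ∀ w ∈ S, ∃ c ∈ A, G.Adj w c)
    (ha : pmP hP u ∈ A) (hb : pmP hP v ∈ B) :
    A = {pmP hP u} := by
  have hu : u ∈ S := by rw [hS]; exact Finset.mem_insert_self u _
  have hv : v ∈ S := by rw [hS]; simp
  -- baseline parity of B : odd
  have base := par hP hsep
  rw [filter_pm_eq hP B S, hS, Finset.image_insert, Finset.image_singleton,
    inter_pair_eq_singleton' hb (fun h => Finset.disjoint_left.mp hsep.hAB ha h),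
    Finset.card_singleton] at base
  -- step (i)
  by_cases h1 : ∃ d ∈ A, G.Adj v d ∧ d ≠ pmP hP u
  · exfalso
    obtain ⟨d, hdA, hvd, hdne⟩ := h1
    obtain ⟨hUinv, hUcard⟩ := closure6 hP u v d
    obtain ⟨P'', hP'', hc1, hc2⟩ := build2 hP hext hcard (adj_pmP hP u) hvd hk
      huv.symm (fun h => Finset.disjoint_left.mp hsep.hSA hv (h ▸ ha))
      (fun h => Finset.disjoint_left.mp hsep.hSA hu (h ▸ hdA)) hdne
      hUinv hUcard (by simp) (by simp) (by simp) (by simp)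
    have new := par hP'' hsep
    rw [filter_pm_eq hP'' B S, hS, Finset.image_insert, Finset.image_singleton,
      hc1, hc2, inter_pair_eq_empty (fun h => Finset.disjoint_left.mp hsep.hAB ha h)
        (fun h => Finset.disjoint_left.mp hsep.hAB hdA h), Finset.card_empty] at new
    omega
  push_neg at h1
  have hva : G.Adj v (pmP hP u) := by
    obtain ⟨c, hcA, hvc⟩ := hnbrA v hv
    rwa [h1 c hcA hvc] at hvc
  -- step (ii)
  by_cases h2 : ∃ c ∈ A, G.Adj u c ∧ c ≠ pmP hP u
  · exfalso
    obtain ⟨c, hcA, huc, hcne⟩ := h2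
    obtain ⟨hUinv, hUcard⟩ := closure6 hP u v c
    obtain ⟨P'', hP'', hc1, hc2⟩ := build2 hP hext hcard huc hva hk
      huv.symm (fun h => Finset.disjoint_left.mp hsep.hSA hv (h ▸ hcA))
      (fun h => Finset.disjoint_left.mp hsep.hSA hu (h ▸ ha)) (fun h => hcne h.symm)
      hUinv hUcard (by simp) (by simp) (by simp) (by simp)
    have new := par hP'' hsep
    rw [filter_pm_eq hP'' B S, hS, Finset.image_insert, Finset.image_singleton,
      hc1, hc2, inter_pair_eq_empty (fun h => Finset.disjoint_left.mp hsep.hAB hcA h)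
        (fun h => Finset.disjoint_left.mp hsep.hAB ha h), Finset.card_empty] at new
    omega
  push_neg at h2
  -- step (iii)
  by_contra hAne
  have hx : ∃ x ∈ A, x ≠ pmP hP u := by
    by_contra hforall
    push_neg at hforall
    exact hAne (Finset.eq_singleton_iff_unique_mem.mpr ⟨ha, hforall⟩)
  obtain ⟨x, hxA, hxa⟩ := hx
  have sep' : IsSep G {pmP hP u} (A.erase (pmP hP u)) (B ∪ S) := by
    refine ⟨⟨x, Finset.mem_erase.mpr ⟨hxa, hxA⟩⟩, ⟨pmP hP v, Finset.mem_union_left _ hb⟩,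
      ?_, ?_, ?_, ?_, ?_⟩
    · exact Finset.disjoint_singleton_left.mpr (Finset.notMem_erase _ _)
    · rw [Finset.disjoint_singleton_left, Finset.mem_union]
      rintro (h | h)
      · exact Finset.disjoint_left.mp hsep.hAB ha h
      · exact Finset.disjoint_left.mp hsep.hSA h ha
    · rw [Finset.disjoint_union_right]
      constructor
      · exact (hsep.hAB.mono_left (Finset.erase_subset _ _))
      · exact (hsep.hSA.symm.mono_left (Finset.erase_subset _ _))
    · intro z
      rcases hsep.hcov z with hz | hz | hz
      · exact Or.inr (Or.inr (Finset.mem_union_right _ hz))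
      · by_cases hza : z = pmP hP u
        · exact Or.inl (by simp [hza])
        · exact Or.inr (Or.inl (Finset.mem_erase.mpr ⟨hza, hz⟩))
      · exact Or.inr (Or.inr (Finset.mem_union_left _ hz))
    · intro y hy w hw hadj
      have hyA : y ∈ A := Finset.mem_of_mem_erase hy
      have hyne : y ≠ pmP hP u := (Finset.mem_erase.mp hy).1
      rcases Finset.mem_union.mp hw with hwB | hwS
      · exact hsep.hadj hyA hwB hadj
      · rw [hS] at hwS
        rcases Finset.mem_insert.mp hwS with rfl | hwv
        · exact hyne (h2 y hyA hadj.symm)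
        · rw [Finset.mem_singleton] at hwv
          subst hwv
          exact hyne (h1 y hyA hadj.symm)
  have := hmin _ _ _ sep'
  simp at this


lemma closure4 {P : G.Subgraph} (hP : P.IsPerfectMatching) (u c : V) :
    (∀ x ∈ ({u, pmP hP u, c, pmP hP c} : Finset V),
      pmP hP x ∈ ({u, pmP hP u, c, pmP hP c} : Finset V)) ∧
    ({u, pmP hP u, c, pmP hP c} : Finset V).card ≤ 4 := by
  constructor
  · intro x hx
    simp only [Finset.mem_insert, Finset.mem_singleton] at hx ⊢
    rcases hx with rfl | rfl | rfl | rfl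
    · tauto
    · rw [pmP_invol]; tauto
    · tauto
    · rw [pmP_invol]; tauto
  · have h1 := Finset.card_insert_le u ({pmP hP u, c, pmP hP c} : Finset V)
    have h2 := Finset.card_insert_le (pmP hP u) ({c, pmP hP c} : Finset V)
    have h3 := Finset.card_insert_le c ({pmP hP c} : Finset V)
    have h4 : ({pmP hP c} : Finset V).card = 1 := Finset.card_singleton _
    omega

/-- The case of a cutset of size at least 3: reduction to `(k-1)`-extendability
of `G - u - z`. -/
lemma case_s3 {k : ℕ} {P : G.Subgraph} (hP : P.IsPerfectMatching)
    (hext : G.IsKExtendable k) (hcard : 2 * k + 2 ≤ Fintype.card V)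
    {S A B : Finset V} (hsep : IsSep G S A B) (hs3 : 3 ≤ S.card) (hSk : S.card ≤ k)
    (hA2 : 2 ≤ A.card)
    (hmin : ∀ S' A' B' : Finset V, IsSep G S' A' B' → S.card ≤ S'.card)
    (hnbrA : ∀ w ∈ S, ∃ c ∈ A, G.Adj w c)
    (IH : ∀ {V' : Type u} [Fintype V'] [DecidableEq V'] (G' : SimpleGraph V'),
      G'.Connected → G'.IsKExtendable (k-1) → 2*(k-1)+2 ≤ Fintype.card V' →
      ∀ S' A' B' : Finset V', S'.card ≤ k-1 → IsSep G' S' A' B' → False) : False := by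
  classical
  have hk3 : 3 ≤ k := le_trans hs3 hSk
  obtain ⟨u, hu⟩ := Finset.card_pos.mp (by omega : 0 < S.card)
  obtain ⟨z, hzA, huz⟩ := hnbrA u hu
  have huzne : u ≠ z := fun h => Finset.disjoint_left.mp hsep.hSA hu (h ▸ hzA)
  set W : Finset V := ({u, z} : Finset V)ᶜ with hW
  have hWmem : ∀ x : V, x ∈ W ↔ (x ≠ u ∧ x ≠ z) := by
    intro x
    rw [hW, Finset.mem_compl, Finset.mem_insert, Finset.mem_singleton]
    tauto
  have hpair : ({u, z} : Finset V).card = 2 := by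
    rw [Finset.card_insert_of_notMem (by simpa using huzne), Finset.card_singleton]
  have hWcard : W.card = Fintype.card V - 2 := by
    rw [hW, Finset.card_compl, hpair]
  -- a perfect matching P₃ of G containing the edge u-z
  have hUinv : ∀ x ∈ ({u, pmP hP u, z, pmP hP z} : Finset V),
      pmP hP x ∈ ({u, pmP hP u, z, pmP hP z} : Finset V) := by
    intro x hx
    simp only [Finset.mem_insert, Finset.mem_singleton] at hx ⊢
    rcases hx with rfl | rfl | rfl | rfl
    · tauto
    · rw [pmP_invol]; tauto
    · tauto
    · rw [pmP_invol]; tauto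
  have hUcard : ({u, pmP hP u, z, pmP hP z} : Finset V).card ≤ 4 := by
    have h1 := Finset.card_insert_le u ({pmP hP u, z, pmP hP z} : Finset V)
    have h2 := Finset.card_insert_le (pmP hP u) ({z, pmP hP z} : Finset V)
    have h3 := Finset.card_insert_le z ({pmP hP z} : Finset V)
    have h4 : ({pmP hP z} : Finset V).card = 1 := Finset.card_singleton _
    omega
  obtain ⟨N₀, hN₀, hN₀card, hN₀supp⟩ := pad hP (k-1) _ hUinv (by omega)
  obtain ⟨hm₀, hc₀, hs₀⟩ := matching_sup_edge hN₀ huz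
    (fun h => hN₀supp u h (by simp)) (fun h => hN₀supp z h (by simp))
  obtain ⟨P₃, hP₃, hle₃⟩ := hext.2 _ hm₀ (by rw [hc₀, hN₀card]; omega)
  have hP₃uz : P₃.Adj u z := hle₃.2 (Subgraph.sup_adj.mpr (Or.inr (by simp)))
  have hpm₃u : pmP hP₃ u = z := pmP_eq hP₃ hP₃uz
  have hpm₃z : pmP hP₃ z = u := pmP_eq hP₃ hP₃uz.symm
  have hcl₃ : ∀ x : V, x ∈ W → pmP hP₃ x ∈ W := by
    intro x hx
    rw [hWmem] at hx ⊢
    constructor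
    · intro h
      exact hx.2 (by rw [← pmP_invol hP₃ x, h, hpm₃u])
    · intro h
      exact hx.1 (by rw [← pmP_invol hP₃ x, h, hpm₃z])
  obtain ⟨Q₀, hQ₀, hQ₀verts, hQ₀adj⟩ := restrPM hP₃ W hcl₃
  -- cardinality of the induced graph
  have hcardW : Fintype.card (W : Set V) = Fintype.card V - 2 := by
    rw [← hWcard]
    exact Fintype.card_coe W
  have hWne : W.Nonempty := by
    rw [← Finset.card_pos, hWcard]
    omega
  -- G' is connected
  have hG'conn : (G.induce (W : Set V)).Connected := by
    by_contra hnc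
    obtain ⟨A', B', hsep'⟩ := sep_of_induce_disconnected hWne hnc
    have := hmin _ _ _ (by rwa [hW, compl_compl] at hsep')
    rw [hpair] at this
    omega
  -- G' is (k-1)-extendable
  have hext' : (G.induce (W : Set V)).IsKExtendable (k-1) := by
    constructor
    · exact ⟨Q₀, hQ₀⟩
    · intro M₂ hM₂ hM₂card
      obtain ⟨M', hM', hM'card, hM'supp, hM'adj⟩ := liftSub W M₂ hM₂
      have hus : u ∉ M'.support := fun h => by
        have := hM'supp u h
        rw [hWmem] at this
        exact this.1 rfl
      have hzs : z ∉ M'.support := fun h => by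
        have := hM'supp z h
        rw [hWmem] at this
        exact this.2 rfl
      obtain ⟨hm₃, hc₃, hs₃⟩ := matching_sup_edge hM' huz hus hzs
      obtain ⟨P₄, hP₄, hle₄⟩ := hext.2 _ hm₃ (by rw [hc₃, hM'card, hM₂card]; omega)
      have hP₄uz : P₄.Adj u z := hle₄.2 (Subgraph.sup_adj.mpr (Or.inr (by simp)))
      have hcl₄ : ∀ x : V, x ∈ W → pmP hP₄ x ∈ W := by
        intro x hx
        rw [hWmem] at hx ⊢
        constructor
        · intro h
          exact hx.2 (by rw [← pmP_invol hP₄ x, h, pmP_eq hP₄ hP₄uz])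
        · intro h
          exact hx.1 (by rw [← pmP_invol hP₄ x, h, pmP_eq hP₄ hP₄uz.symm])
      obtain ⟨Q₄, hQ₄, hQ₄verts, hQ₄adj⟩ := restrPM hP₄ W hcl₄
      refine ⟨Q₄, hQ₄, ?_, ?_⟩
      · rw [hQ₄verts]
        exact Set.subset_univ _
      · intro x y hxy
        exact (hQ₄adj x y).mpr (hle₄.2 (Subgraph.sup_adj.mpr
          (Or.inl ((hM'adj x y).mpr hxy))))
  -- transfer the separation
  have hz_notS : z ∉ S := fun h => Finset.disjoint_left.mp hsep.hSA h hzA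
  set p : V → Prop := fun x => x ∈ (W : Set V) with hp
  have hpW : ∀ x, p x ↔ (x ≠ u ∧ x ≠ z) := by
    intro x
    rw [hp]
    simpa using hWmem x
  set S₂ : Finset (W : Set V) := (S.erase u).subtype p with hS₂
  set A₂ : Finset (W : Set V) := (A.erase z).subtype p with hA₂
  set B₂ : Finset (W : Set V) := B.subtype p with hB₂
  have hmemS₂ : ∀ x : (W : Set V), x ∈ S₂ ↔ (↑x ∈ S.erase u) := by
    intro x; rw [hS₂]; simp [Finset.mem_subtype]
  have hmemA₂ : ∀ x : (W : Set V), x ∈ A₂ ↔ (↑x ∈ A.erase z) := by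
    intro x; rw [hA₂]; simp [Finset.mem_subtype]
  have hmemB₂ : ∀ x : (W : Set V), x ∈ B₂ ↔ (↑x ∈ B) := by
    intro x; rw [hB₂]; simp [Finset.mem_subtype]
  have hS₂card : S₂.card = S.card - 1 := by
    rw [hS₂, Finset.card_subtype]
    have : (S.erase u).filter p = S.erase u := by
      apply Finset.filter_true_of_mem
      intro x hx
      rw [hpW]
      refine ⟨(Finset.mem_erase.mp hx).1, ?_⟩
      intro h
      exact hz_notS (h ▸ (Finset.mem_erase.mp hx).2)
    rw [this, Finset.card_erase_of_mem hu]
  have hsep₂ : IsSep (G.induce (W : Set V)) S₂ A₂ B₂ := by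
    obtain ⟨x, hxA, hxz⟩ : ∃ x ∈ A, x ≠ z := by
      by_contra hcon
      push_neg at hcon
      have : A ⊆ {z} := fun x hx => Finset.mem_singleton.mpr (hcon x hx)
      have := Finset.card_le_card this
      rw [Finset.card_singleton] at this
      omega
    obtain ⟨b, hbB⟩ := hsep.hB
    have hxW : p x := by
      rw [hpW]
      exact ⟨fun h => Finset.disjoint_left.mp hsep.hSA hu (h ▸ hxA), hxz⟩
    have hbW : p b := by
      rw [hpW]
      exact ⟨fun h => Finset.disjoint_left.mp hsep.hSB hu (h ▸ hbB),
        fun h => Finset.disjoint_left.mp hsep.hAB hzA (h ▸ hbB)⟩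
    refine ⟨⟨⟨x, hxW⟩, ?_⟩, ⟨⟨b, hbW⟩, ?_⟩, ?_, ?_, ?_, ?_, ?_⟩
    · rw [hmemA₂]
      exact Finset.mem_erase.mpr ⟨hxz, hxA⟩
    · rw [hmemB₂]
      exact hbB
    · rw [Finset.disjoint_left]
      intro a ha ha'
      rw [hmemS₂] at ha
      rw [hmemA₂] at ha'
      exact Finset.disjoint_left.mp hsep.hSA (Finset.mem_of_mem_erase ha)
        (Finset.mem_of_mem_erase ha')
    · rw [Finset.disjoint_left]
      intro a ha ha'
      rw [hmemS₂] at ha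
      rw [hmemB₂] at ha'
      exact Finset.disjoint_left.mp hsep.hSB (Finset.mem_of_mem_erase ha) ha'
    · rw [Finset.disjoint_left]
      intro a ha ha'
      rw [hmemA₂] at ha
      rw [hmemB₂] at ha'
      exact Finset.disjoint_left.mp hsep.hAB (Finset.mem_of_mem_erase ha) ha'
    · rintro ⟨x, hxW⟩
      have hxuz := (hpW x).mp hxW
      rcases hsep.hcov x with hx | hx | hx
      · exact Or.inl ((hmemS₂ _).mpr (Finset.mem_erase.mpr ⟨hxuz.1, hx⟩))
      · exact Or.inr (Or.inl ((hmemA₂ _).mpr (Finset.mem_erase.mpr ⟨hxuz.2, hx⟩)))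
      · exact Or.inr (Or.inr ((hmemB₂ _).mpr hx))
    · intro a ha b' hb' hadj
      rw [hmemA₂] at ha
      rw [hmemB₂] at hb'
      exact hsep.hadj (Finset.mem_of_mem_erase ha) hb' hadj
  exact IH (G.induce (W : Set V)) hG'conn hext'
    (by rw [hcardW]; omega) S₂ A₂ B₂ (by omega) hsep₂

end Helpers

lemma noSep : ∀ (k : ℕ) {V : Type u} [Fintype V] [DecidableEq V] (G : SimpleGraph V),
    G.Connected → G.IsKExtendable k → 2 * k + 2 ≤ Fintype.card V →
    ∀ S A B : Finset V, S.card ≤ k → IsSep G S A B → False := by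
  intro k
  induction k using Nat.strong_induction_on with
  | _ k IHk =>
  intro V _ _ G hconn hext hcard S₀ A₀ B₀ hSk₀ hsep₀
  obtain ⟨P, hP⟩ := hext.1
  suffices H : ∀ s : ℕ, ∀ S A B : Finset V, S.card = s → S.card ≤ k → IsSep G S A B → False by
    exact H S₀.card S₀ A₀ B₀ rfl hSk₀ hsep₀
  intro s
  induction s using Nat.strong_induction_on with
  | _ s IHs =>
  intro S A B hcards hSk hsep
  subst hcards
  have hmin : ∀ S' A' B' : Finset V, IsSep G S' A' B' → S.card ≤ S'.card := by
    intro S' A' B' hsep'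
    by_contra hlt
    push_neg at hlt
    exact IHs S'.card hlt S' A' B' rfl (by omega) hsep'
  have hnbr : ∀ (S' A' B' : Finset V), IsSep G S' A' B' → S'.card = S.card →
      ∀ w ∈ S', ∃ c ∈ A', G.Adj w c := by
    intro S' A' B' hsep' hcard' w hw
    by_contra hno
    push_neg at hno
    have hsep'' : IsSep G (S'.erase w) A' (insert w B') := by
      refine ⟨hsep'.hA, Finset.insert_nonempty _ _, ?_, ?_, ?_, ?_, ?_⟩
      · exact hsep'.hSA.mono_left (Finset.erase_subset _ _)
      · rw [Finset.disjoint_insert_right]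
        exact ⟨Finset.notMem_erase _ _, hsep'.hSB.mono_left (Finset.erase_subset _ _)⟩
      · rw [Finset.disjoint_insert_right]
        exact ⟨fun h => Finset.disjoint_left.mp hsep'.hSA hw h, hsep'.hAB⟩
      · intro z
        rcases hsep'.hcov z with hz | hz | hz
        · by_cases hzw : z = w
          · exact Or.inr (Or.inr (Finset.mem_insert.mpr (Or.inl hzw)))
          · exact Or.inl (Finset.mem_erase.mpr ⟨hzw, hz⟩)
        · exact Or.inr (Or.inl hz)
        · exact Or.inr (Or.inr (Finset.mem_insert.mpr (Or.inr hz)))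
      · intro a ha b hb hadj
        rcases Finset.mem_insert.mp hb with rfl | hb'
        · exact hno a ha hadj.symm
        · exact hsep'.hadj ha hb' hadj
    have h1 := hmin _ _ _ hsep''
    have h2 : 1 ≤ S'.card := Finset.card_pos.mpr ⟨w, hw⟩
    rw [Finset.card_erase_of_mem hw] at h1
    omega
  have hnbrA := hnbr S A B hsep rfl
  have hnbrB := hnbr S B A hsep.symm rfl
  -- case split on s = S.card
  rcases Nat.lt_or_ge S.card 1 with hs | hs
  · -- s = 0
    have hSempty : S = ∅ := Finset.card_eq_zero.mp (by omega)
    obtain ⟨x, hx⟩ := hsep.hA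
    obtain ⟨y, hy⟩ := hsep.hB
    have hcov' : ∀ z, z ∈ A ∨ z ∈ B := by
      intro z
      rcases hsep.hcov z with hz | hz | hz
      · rw [hSempty] at hz; exact absurd hz (Finset.notMem_empty z)
      · exact Or.inl hz
      · exact Or.inr hz
    obtain ⟨p⟩ := hconn.preconnected x y
    exact Finset.disjoint_left.mp hsep.hAB (walk_stay hsep.hadj hcov' p hx) hy
  rcases Nat.lt_or_ge S.card 2 with hs2 | hs2
  · -- s = 1
    obtain ⟨u, hS⟩ := Finset.card_eq_one.mp (by omega : S.card = 1)
    have hu : u ∈ S := by rw [hS]; exact Finset.mem_singleton_self u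
    obtain ⟨c, hcA, huc⟩ := hnbrA u hu
    obtain ⟨d, hdB, hud⟩ := hnbrB u hu
    obtain ⟨hU1inv, hU1card⟩ := closure4 hP u c
    obtain ⟨P₁, hP₁, hpm₁⟩ := build1 hP hext hcard huc (by omega) hU1inv hU1card
      (by simp) (by simp)
    obtain ⟨hU2inv, hU2card⟩ := closure4 hP u d
    obtain ⟨P₂, hP₂, hpm₂⟩ := build1 hP hext hcard hud (by omega) hU2inv hU2card
      (by simp) (by simp)
    have par₁ := par hP₁ hsep
    have par₂ := par hP₂ hsep
    rw [filter_pm_eq hP₁ B S, hS, Finset.image_singleton, hpm₁] at par₁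
    rw [filter_pm_eq hP₂ B S, hS, Finset.image_singleton, hpm₂] at par₂
    have h1 : B ∩ ({c} : Finset V) = ∅ := by
      ext x
      simp only [Finset.mem_inter, Finset.mem_singleton, Finset.notMem_empty, iff_false]
      rintro ⟨hx, rfl⟩
      exact Finset.disjoint_left.mp hsep.hAB hcA hx
    have h2 : B ∩ ({d} : Finset V) = {d} := by
      ext x
      simp only [Finset.mem_inter, Finset.mem_singleton]
      constructor
      · rintro ⟨hx, rfl⟩; rfl
      · rintro rfl; exact ⟨hdB, rfl⟩
    rw [h1, Finset.card_empty] at par₁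
    rw [h2, Finset.card_singleton] at par₂
    omega
  rcases Nat.lt_or_ge S.card 3 with hs3 | hs3
  · -- s = 2
    have hk2 : 2 ≤ k := by omega
    obtain ⟨u, v, huv, hS⟩ := Finset.card_eq_two.mp (by omega : S.card = 2)
    have hu : u ∈ S := by rw [hS]; exact Finset.mem_insert_self u _
    have hv : v ∈ S := by rw [hS]; simp
    by_cases hcase : pmP hP u = v
    · -- case (a) : u and v matched to each other by P
      obtain ⟨c, hcA, huc⟩ := hnbrA u hu
      obtain ⟨d, hdB, hvd⟩ := hnbrB v hv
      obtain ⟨hUinv, hUcard⟩ := closure6 hP u c d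
      obtain ⟨P'', hP'', hpc, hpd⟩ := build2 hP hext hcard huc hvd hk2
        huv.symm (fun h => Finset.disjoint_left.mp hsep.hSA hv (h ▸ hcA))
        (fun h => Finset.disjoint_left.mp hsep.hSB hu (h ▸ hdB))
        (fun h => Finset.disjoint_left.mp hsep.hAB hcA (h ▸ hdB))
        hUinv hUcard (by simp) (by simp) (by simp [← hcase]) (by simp)
      have base := par hP hsep.symm
      have new := par hP'' hsep.symm
      rw [filter_pm_eq hP A S, hS, Finset.image_insert, Finset.image_singleton] at base
      rw [filter_pm_eq hP'' A S, hS, Finset.image_insert, Finset.image_singleton,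
        hpc, hpd] at new
      have hpvu : pmP hP v = u := by rw [← hcase, pmP_invol]
      rw [hcase, hpvu, inter_pair_eq_empty
        (fun h => Finset.disjoint_left.mp hsep.hSA hv h)
        (fun h => Finset.disjoint_left.mp hsep.hSA hu h), Finset.card_empty] at base
      rw [inter_pair_eq_singleton hcA
        (fun h => Finset.disjoint_left.mp hsep.hAB h hdB), Finset.card_singleton] at new
      omega
    · -- case (b)
      have hpvne : pmP hP v ≠ u := by
        intro h
        apply hcase
        rw [← pmP_invol hP v, h]
      have haS : pmP hP u ∉ S := by
        rw [hS, Finset.mem_insert, Finset.mem_singleton]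
        rintro (h | h)
        · exact pmP_ne hP u h
        · exact hcase h
      have hbS : pmP hP v ∉ S := by
        rw [hS, Finset.mem_insert, Finset.mem_singleton]
        rintro (h | h)
        · exact hpvne h
        · exact pmP_ne hP v h
      have hmin2 : ∀ S' A' B' : Finset V, IsSep G S' A' B' → 2 ≤ S'.card := by
        intro S' A' B' h
        have := hmin S' A' B' h
        omega
      have hcard4 : A.card = 1 → B.card = 1 → False := by
        intro hA1 hB1
        have huniv : (Finset.univ : Finset V) ⊆ S ∪ A ∪ B := by
          intro x _
          rcases hsep.hcov x with hx | hx | hx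
          · exact Finset.mem_union_left _ (Finset.mem_union_left _ hx)
          · exact Finset.mem_union_left _ (Finset.mem_union_right _ hx)
          · exact Finset.mem_union_right _ hx
        have h1 := Finset.card_le_card huniv
        have h2 := Finset.card_union_le (S ∪ A) B
        have h3 := Finset.card_union_le S A
        rw [Finset.card_univ] at h1
        have hS2 : S.card = 2 := by omega
        omega
      rcases hsep.hcov (pmP hP u) with h | haA | haB
      · exact absurd h haS
      · rcases hsep.hcov (pmP hP v) with h | hbA | hbB
        · exact absurd h hbS
        · exact case_b1 hP hext hcard hsep hS huv hk2 haA hbA (hnbrB v hv)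
        · have hAeq := case_b2_half hP hext hcard hsep hS huv hk2 hmin2 hnbrA haA hbB
          have hBeq := case_b2_half hP hext hcard hsep.symm
            (by rw [hS]; exact Finset.pair_comm u v) huv.symm hk2 hmin2 hnbrB hbB haA
          exact hcard4 (by rw [hAeq]; exact Finset.card_singleton _)
            (by rw [hBeq]; exact Finset.card_singleton _)
      · rcases hsep.hcov (pmP hP v) with h | hbA | hbB
        · exact absurd h hbS
        · have hBeq := case_b2_half hP hext hcard hsep.symm hS huv hk2 hmin2 hnbrB haB hbA
          have hAeq := case_b2_half hP hext hcard hsep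
            (by rw [hS]; exact Finset.pair_comm u v) huv.symm hk2 hmin2 hnbrA hbA haB
          exact hcard4 (by rw [hAeq]; exact Finset.card_singleton _)
            (by rw [hBeq]; exact Finset.card_singleton _)
        · exact case_b1 hP hext hcard hsep.symm hS huv hk2 haB hbB (hnbrA v hv)
  · -- s ≥ 3
    have hk3 : 3 ≤ k := by omega
    have IH' : ∀ {V' : Type u} [Fintype V'] [DecidableEq V'] (G' : SimpleGraph V'),
        G'.Connected → G'.IsKExtendable (k-1) → 2*(k-1)+2 ≤ Fintype.card V' →
        ∀ S' A' B' : Finset V', S'.card ≤ k-1 → IsSep G' S' A' B' → False := by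
      intro V' _ _ G' h1 h2 h3 S' A' B' h4 h5
      exact IHk (k-1) (by omega) G' h1 h2 h3 S' A' B' h4 h5
    by_cases hA2 : 2 ≤ A.card
    · exact case_s3 hP hext hcard hsep hs3 hSk hA2 hmin hnbrA IH'
    by_cases hB2 : 2 ≤ B.card
    · exact case_s3 hP hext hcard hsep.symm hs3 hSk hB2 hmin hnbrB IH'
    · have hA1 : A.card = 1 := by
        have := Finset.card_pos.mpr hsep.hA
        omega
      have hB1 : B.card = 1 := by
        have := Finset.card_pos.mpr hsep.hB
        omega
      have huniv : (Finset.univ : Finset V) ⊆ S ∪ A ∪ B := by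
        intro x _
        rcases hsep.hcov x with hx | hx | hx
        · exact Finset.mem_union_left _ (Finset.mem_union_left _ hx)
        · exact Finset.mem_union_left _ (Finset.mem_union_right _ hx)
        · exact Finset.mem_union_right _ hx
      have h1 := Finset.card_le_card huniv
      have h2 := Finset.card_union_le (S ∪ A) B
      have h3 := Finset.card_union_le S A
      rw [Finset.card_univ] at h1
      omega

/-- A connected `k`-extendable graph on at least `2k+2` vertices is `(k+1)`-connected
(removing any at most `k` vertices leaves a connected graph, and `|G| > k+1`);
in particular its minimum degree is at least `k+1`. -/
theorem kExtendable_connectivity {V : Type*} [Fintype V] [DecidableEq V]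
    (G : SimpleGraph V) [DecidableRel G.Adj] (k : ℕ)
    (hconn : G.Connected) (h : G.IsKExtendable k) (hcard : 2 * k + 2 ≤ Fintype.card V) :
    (k + 1 < Fintype.card V ∧
      ∀ S : Finset V, S.card ≤ k → (G.induce ((Sᶜ : Finset V) : Set V)).Connected) ∧
    k + 1 ≤ G.minDegree := by
  refine ⟨⟨by omega, ?_⟩, ?_⟩
  · intro S hS
    by_contra hnc
    have hW : (Sᶜ : Finset V).Nonempty := by
      rw [← Finset.card_pos, Finset.card_compl]
      omega
    obtain ⟨A, B, hsep⟩ := sep_of_induce_disconnected hW hnc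
    rw [compl_compl] at hsep
    exact noSep k G hconn h hcard S A B hS hsep
  · by_contra hlt
    push_neg at hlt
    have : Nonempty V := by
      rw [← Fintype.card_pos_iff]
      omega
    obtain ⟨v, hv⟩ := G.exists_minimal_degree_vertex
    have hdeg : G.degree v ≤ k := by omega
    have hScard : (G.neighborFinset v).card ≤ k := hdeg
    set S : Finset V := G.neighborFinset v with hSdef
    set B : Finset V := Finset.univ \ (insert v S) with hBdef
    have hvS : v ∉ S := by
      rw [hSdef, SimpleGraph.mem_neighborFinset]
      exact G.loopless.irrefl v
    have hBmem : ∀ x, x ∈ B ↔ (x ≠ v ∧ x ∉ S) := by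
      intro x
      rw [hBdef, Finset.mem_sdiff, Finset.mem_insert]
      constructor
      · rintro ⟨_, hx⟩
        tauto
      · rintro ⟨h1, h2⟩
        exact ⟨Finset.mem_univ x, by tauto⟩
    have hBne : B.Nonempty := by
      rw [← Finset.card_pos, hBdef, Finset.card_sdiff_of_subset (Finset.subset_univ _)]
      have h1 := Finset.card_insert_le v S
      rw [Finset.card_univ]
      omega
    have hsep : IsSep G S {v} B := by
      refine ⟨⟨v, Finset.mem_singleton_self v⟩, hBne, ?_, ?_, ?_, ?_, ?_⟩
      · exact Finset.disjoint_singleton_right.mpr hvS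
      · rw [Finset.disjoint_left]
        intro x hx hx'
        exact ((hBmem x).mp hx').2 hx
      · rw [Finset.disjoint_left]
        intro x hx hx'
        rw [Finset.mem_singleton] at hx
        exact ((hBmem x).mp hx').1 hx
      · intro x
        by_cases h1 : x = v
        · exact Or.inr (Or.inl (Finset.mem_singleton.mpr h1))
        · by_cases h2 : x ∈ S
          · exact Or.inl h2
          · exact Or.inr (Or.inr ((hBmem x).mpr ⟨h1, h2⟩))
      · intro a ha b hb hadj
        rw [Finset.mem_singleton] at ha
        subst ha
        apply ((hBmem b).mp hb).2
        rw [hSdef, SimpleGraph.mem_neighborFinset]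
        exact hadj
    exact noSep k G hconn h hcard S {v} B hScard hsep
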